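/- Let r ≥ 3 and let G be a finite simple triangle-free graph with maximum degree at most 3 and at least one edge. Then there exists a finite simple graph G′ together with a bijection φ from the vertex set of G onto the set of all r-cliques of G′, such that: (i) for distinct vertices u, v of G, if u and v are adjacent in G then |φ(u) ∩ φ(v)| = ⌊r/3⌋, and if u and v are non-adjacent then φ(u) ∩ φ(v) = ∅; and (ii) the maximum degree of G′ equals ⌈5r/3⌉ − 1. -/

import Mathlib

set_option linter.unusedSectionVars false
open Finset

namespace Stmt4Aux

lemma card_filter_lt (n k : ℕ) (h : k ≤ n) :
    (Finset.univ.filter fun i : Fin n => (i : ℕ) < k).card = k := by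
  have he : (Finset.univ.filter fun i : Fin n => (i : ℕ) < k)
      = (Finset.range k).attachFin
        (fun m hm => lt_of_lt_of_le (Finset.mem_range.mp hm) h) := by
    ext i; simp [Finset.mem_attachFin]
  rw [he, Finset.card_attachFin, Finset.card_range]

lemma card_filter_ge (n k : ℕ) (h : k ≤ n) :
    (Finset.univ.filter fun i : Fin n => k ≤ (i : ℕ)).card = n - k := by
  have h2 := Finset.card_filter_add_card_filter_not
    (s := (Finset.univ : Finset (Fin n))) (fun i : Fin n => (i : ℕ) < k)
  rw [card_filter_lt n k h, Finset.card_univ, Fintype.card_fin] at h2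
  have he : (Finset.univ.filter fun i : Fin n => k ≤ (i : ℕ))
      = (Finset.univ.filter fun i : Fin n => ¬ (i : ℕ) < k) := by
    ext i; simp [not_lt]
  rw [he]; omega

variable {V : Type*} [Fintype V] [DecidableEq V] (G : SimpleGraph V) [DecidableRel G.Adj] (r : ℕ)

def phi (u : V) : Finset ((Sym2 V ⊕ V) × Fin r) :=
  (((G.neighborFinset u).image fun v => (Sum.inl s(u, v) : Sym2 V ⊕ V)) ×ˢ
      (Finset.univ.filter fun i : Fin r => (i : ℕ) < r / 3))
  ∪ (({Sum.inr u} : Finset (Sym2 V ⊕ V)) ×ˢ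
      (Finset.univ.filter fun i : Fin r => G.degree u * (r / 3) ≤ (i : ℕ)))

variable {G r}

lemma mem_phi {x : (Sym2 V ⊕ V) × Fin r} {u : V} :
    x ∈ phi G r u ↔
      (∃ v, G.Adj u v ∧ x.1 = Sum.inl s(u, v) ∧ (x.2 : ℕ) < r / 3) ∨
      (x.1 = Sum.inr u ∧ G.degree u * (r / 3) ≤ (x.2 : ℕ)) := by
  obtain ⟨a, i⟩ := x
  simp only [phi, Finset.mem_union, Finset.mem_product, Finset.mem_image,
    SimpleGraph.mem_neighborFinset, Finset.mem_filter, Finset.mem_univ, true_and,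
    Finset.mem_singleton]
  constructor
  · rintro (⟨⟨v, hv, rfl⟩, hi⟩ | ⟨rfl, hi⟩)
    · exact Or.inl ⟨v, hv, rfl, hi⟩
    · exact Or.inr ⟨rfl, hi⟩
  · rintro (⟨v, hv, rfl, hi⟩ | ⟨rfl, hi⟩)
    · exact Or.inl ⟨⟨v, hv, rfl⟩, hi⟩
    · exact Or.inr ⟨rfl, hi⟩

lemma degmul_le (hΔ : G.maxDegree ≤ 3) (u : V) : G.degree u * (r / 3) ≤ r := by
  have hd : G.degree u ≤ 3 := le_trans (G.degree_le_maxDegree u) hΔ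
  calc G.degree u * (r / 3) ≤ 3 * (r / 3) := Nat.mul_le_mul_right _ hd
    _ ≤ r := by omega

lemma card_phi (hΔ : G.maxDegree ≤ 3) (u : V) : (phi G r u).card = r := by
  have hm := degmul_le (r := r) hΔ u
  have hdisj : Disjoint
      (((G.neighborFinset u).image fun v => (Sum.inl s(u, v) : Sym2 V ⊕ V)) ×ˢ
        (Finset.univ.filter fun i : Fin r => (i : ℕ) < r / 3))
      (({Sum.inr u} : Finset (Sym2 V ⊕ V)) ×ˢ
        (Finset.univ.filter fun i : Fin r => G.degree u * (r / 3) ≤ (i : ℕ))) := by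
    rw [Finset.disjoint_left]
    rintro ⟨a, i⟩ h1 h2
    simp only [Finset.mem_product, Finset.mem_image, Finset.mem_singleton] at h1 h2
    obtain ⟨⟨v, _, hv⟩, _⟩ := h1
    rw [h2.1] at hv
    exact Sum.inl_ne_inr hv
  have hinj : Set.InjOn (fun v => (Sum.inl s(u, v) : Sym2 V ⊕ V)) ↑(G.neighborFinset u) := by
    intro v hv w hw hvw
    simp only [Sum.inl.injEq, Sym2.eq_iff] at hvw
    rcases hvw with ⟨-, h⟩ | ⟨h1, h2⟩
    · exact h
    · simp only [Finset.mem_coe, SimpleGraph.mem_neighborFinset] at hv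
      exact absurd h2 (by rintro rfl; exact hv.ne' rfl)
  rw [phi, Finset.card_union_of_disjoint hdisj, Finset.card_product, Finset.card_product,
    Finset.card_image_of_injOn hinj, Finset.card_singleton,
    card_filter_lt r (r / 3) (Nat.div_le_self r 3), card_filter_ge r _ hm,
    SimpleGraph.card_neighborFinset_eq_degree]
  omega

lemma phi_inter_of_adj {u v : V} (huv : G.Adj u v) :
    phi G r u ∩ phi G r v =
      ({(Sum.inl s(u, v) : Sym2 V ⊕ V)} : Finset _) ×ˢ
        (Finset.univ.filter fun i : Fin r => (i : ℕ) < r / 3) := by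
  ext ⟨a, i⟩
  simp only [Finset.mem_inter, mem_phi, Finset.mem_product, Finset.mem_singleton,
    Finset.mem_filter, Finset.mem_univ, true_and]
  constructor
  · rintro ⟨hu | ⟨hu, -⟩, hv | hv⟩
    · obtain ⟨w, hw, rfl, hi⟩ := hu
      obtain ⟨w', hw', he, -⟩ := hv
      simp only [Sum.inl.injEq, Sym2.eq_iff] at he
      rcases he with ⟨rfl, rfl⟩ | ⟨rfl, rfl⟩
      · exact absurd rfl huv.ne
      · exact ⟨rfl, hi⟩
    · obtain ⟨w, hw, rfl, hi⟩ := hu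
      exact absurd hv.1 (by simp)
    · obtain ⟨w, hw, he, -⟩ := hv
      rw [hu] at he; exact absurd he (by simp)
    · rw [hu] at hv
      exact absurd (Sum.inr.inj hv.1) huv.ne
  · rintro ⟨rfl, hi⟩
    refine ⟨Or.inl ⟨v, huv, rfl, hi⟩, Or.inl ⟨u, huv.symm, ?_, hi⟩⟩
    rw [Sym2.eq_swap]

lemma card_phi_inter_of_adj {u v : V} (huv : G.Adj u v) :
    (phi G r u ∩ phi G r v).card = r / 3 := by
  rw [phi_inter_of_adj huv, Finset.card_product, Finset.card_singleton,
    card_filter_lt r (r / 3) (Nat.div_le_self r 3), one_mul]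

lemma phi_inter_of_not_adj {u v : V} (hne : u ≠ v) (h : ¬ G.Adj u v) :
    phi G r u ∩ phi G r v = ∅ := by
  ext ⟨a, i⟩
  simp only [Finset.mem_inter, mem_phi, Finset.notMem_empty, iff_false, not_and]
  rintro (⟨w, hw, rfl, -⟩ | ⟨rfl, -⟩) (⟨w', hw', he, -⟩ | ⟨he, -⟩)
  · simp only [Sum.inl.injEq, Sym2.eq_iff] at he
    rcases he with ⟨rfl, rfl⟩ | ⟨rfl, rfl⟩
    · exact hne rfl
    · exact h hw
  · exact Sum.inl_ne_inr he
  · exact Sum.inr_ne_inl he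
  · exact hne (Sum.inr.inj he)

lemma mem_phi_unique {x : (Sym2 V ⊕ V) × Fin r} {u v : V}
    (hu : x ∈ phi G r u) (hv : x ∈ phi G r v) (hne : u ≠ v) :
    G.Adj u v ∧ x.1 = Sum.inl s(u, v) := by
  by_cases hadj : G.Adj u v
  · have := Finset.mem_inter.mpr ⟨hu, hv⟩
    rw [phi_inter_of_adj hadj, Finset.mem_product, Finset.mem_singleton] at this
    exact ⟨hadj, this.1⟩
  · have := Finset.mem_inter.mpr ⟨hu, hv⟩
    rw [phi_inter_of_not_adj hne hadj] at this
    exact absurd this (Finset.notMem_empty _)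

lemma two_cliques {x : (Sym2 V ⊕ V) × Fin r} {u v w : V}
    (hu : x ∈ phi G r u) (hv : x ∈ phi G r v) (hw : x ∈ phi G r w)
    (hvu : v ≠ u) (hwu : w ≠ u) : v = w := by
  obtain ⟨hadj1, h1⟩ := mem_phi_unique hu hv (Ne.symm hvu)
  obtain ⟨hadj2, h2⟩ := mem_phi_unique hu hw (Ne.symm hwu)
  rw [h1] at h2
  simp only [Sum.inl.injEq, Sym2.eq_iff] at h2
  rcases h2 with ⟨-, h⟩ | ⟨h1', h2'⟩
  · exact h
  · exact absurd h2' hvu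

variable (G r) in
def Gp : SimpleGraph ((Sym2 V ⊕ V) × Fin r) :=
  SimpleGraph.fromRel (fun x y => ∃ u, x ∈ phi G r u ∧ y ∈ phi G r u)

lemma gp_adj {x y : (Sym2 V ⊕ V) × Fin r} :
    (Gp G r).Adj x y ↔ x ≠ y ∧ ∃ u, x ∈ phi G r u ∧ y ∈ phi G r u := by
  rw [Gp, SimpleGraph.fromRel_adj]
  constructor
  · rintro ⟨hne, ⟨u, h1, h2⟩ | ⟨u, h1, h2⟩⟩
    · exact ⟨hne, u, h1, h2⟩
    · exact ⟨hne, u, h2, h1⟩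
  · rintro ⟨hne, u, h1, h2⟩
    exact ⟨hne, Or.inl ⟨u, h1, h2⟩⟩


lemma phi_isNClique (hΔ : G.maxDegree ≤ 3) (u : V) :
    (Gp G r).IsNClique r (phi G r u) := by
  constructor
  · intro x hx y hy hne
    exact gp_adj.mpr ⟨hne, u, hx, hy⟩
  · exact card_phi hΔ u

lemma clique_subset (hr : 3 ≤ r) (htf : G.CliqueFree 3)
    {K : Finset ((Sym2 V ⊕ V) × Fin r)} (hK : (Gp G r).IsNClique r K) :
    ∃ u, K ⊆ phi G r u := by
  have hcard : K.card = r := hK.2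
  have h2 : 1 < K.card := by omega
  obtain ⟨x, hx, y, hy, hxy⟩ := Finset.one_lt_card.mp h2
  obtain ⟨u, hxu, -⟩ := (gp_adj.mp (hK.1 hx hy hxy)).2
  -- every y in K lies in phi u or in phi v for some second clique of x
  by_cases hB : ∃ v, v ≠ u ∧ x ∈ phi G r v
  · obtain ⟨v, hvu, hxv⟩ := hB
    have hKsub : ∀ z ∈ K, z ∈ phi G r u ∪ phi G r v := by
      intro z hz
      by_cases hzx : z = x
      · subst hzx; exact Finset.mem_union_left _ hxu
      · obtain ⟨w, hxw, hzw⟩ := (gp_adj.mp (hK.1 hx hz (Ne.symm hzx))).2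
        by_cases hwu : w = u
        · subst hwu; exact Finset.mem_union_left _ hzw
        · have : v = w := two_cliques hxu hxv hxw hvu hwu
          subst this; exact Finset.mem_union_right _ hzw
    by_cases hKu : K ⊆ phi G r u
    · exact ⟨u, hKu⟩
    by_cases hKv : K ⊆ phi G r v
    · exact ⟨v, hKv⟩
    exfalso
    obtain ⟨a, haK, hau⟩ := Finset.not_subset.mp hKu
    obtain ⟨b, hbK, hbv⟩ := Finset.not_subset.mp hKv
    have hav : a ∈ phi G r v := by
      rcases Finset.mem_union.mp (hKsub a haK) with h | h
      · exact absurd h hau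
      · exact h
    have hbu : b ∈ phi G r u := by
      rcases Finset.mem_union.mp (hKsub b hbK) with h | h
      · exact h
      · exact absurd h hbv
    have hab : a ≠ b := by rintro rfl; exact hau hbu
    obtain ⟨w, haw, hbw⟩ := (gp_adj.mp (hK.1 haK hbK hab)).2
    have hwu : w ≠ u := fun h => hau (h ▸ haw)
    have hwv : w ≠ v := fun h => hbv (h ▸ hbw)
    have hadjuv : G.Adj u v := (mem_phi_unique hxu hxv (Ne.symm hvu)).1
    have hadjuw : G.Adj u w := (mem_phi_unique hbu hbw (Ne.symm hwu)).1
    have hadjvw : G.Adj v w := (mem_phi_unique hav haw (Ne.symm hwv)).1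
    exact htf {u, v, w} (SimpleGraph.is3Clique_triple_iff.mpr ⟨hadjuv, hadjuw, hadjvw⟩)
  · push_neg at hB
    refine ⟨u, fun z hz => ?_⟩
    by_cases hzx : z = x
    · subst hzx; exact hxu
    · obtain ⟨w, hxw, hzw⟩ := (gp_adj.mp (hK.1 hx hz (Ne.symm hzx))).2
      rcases eq_or_ne w u with rfl | hwu
      · exact hzw
      · exact absurd hxw (hB w hwu)


lemma card_phi_union_of_adj (hΔ : G.maxDegree ≤ 3) {u v : V} (huv : G.Adj u v) :
    (phi G r u ∪ phi G r v).card = 2 * r - r / 3 := by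
  have h := Finset.card_union_add_card_inter (phi G r u) (phi G r v)
  rw [card_phi hΔ, card_phi hΔ, card_phi_inter_of_adj huv] at h
  have : r / 3 ≤ r := Nat.div_le_self r 3
  omega

lemma nbhd_subset_two {x : (Sym2 V ⊕ V) × Fin r} {u v : V}
    (hu : x ∈ phi G r u) (hv : x ∈ phi G r v) (hvu : v ≠ u) :
    (Gp G r).neighborSet x ⊆ ↑((phi G r u ∪ phi G r v).erase x) := by
  intro y hy
  obtain ⟨hne, w, hxw, hyw⟩ := gp_adj.mp hy
  rw [Finset.mem_coe, Finset.mem_erase]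
  refine ⟨Ne.symm hne, ?_⟩
  rcases eq_or_ne w u with rfl | hwu
  · exact Finset.mem_union_left _ hyw
  · have : v = w := two_cliques hu hv hxw hvu hwu
    subst this
    exact Finset.mem_union_right _ hyw

lemma nbhd_bound (hΔ : G.maxDegree ≤ 3) (x : (Sym2 V ⊕ V) × Fin r) :
    ((Gp G r).neighborSet x).ncard ≤ 2 * r - r / 3 - 1 := by
  by_cases hx : ∃ u, x ∈ phi G r u
  · obtain ⟨u, hu⟩ := hx
    by_cases hB : ∃ v, v ≠ u ∧ x ∈ phi G r v
    · obtain ⟨v, hvu, hv⟩ := hB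
      have hsub := nbhd_subset_two hu hv hvu
      calc ((Gp G r).neighborSet x).ncard
          ≤ (↑((phi G r u ∪ phi G r v).erase x) : Set _).ncard :=
            Set.ncard_le_ncard hsub (Finset.finite_toSet _)
        _ = ((phi G r u ∪ phi G r v).erase x).card := Set.ncard_coe_finset _
        _ = (phi G r u ∪ phi G r v).card - 1 :=
            Finset.card_erase_of_mem (Finset.mem_union_left _ hu)
        _ = 2 * r - r / 3 - 1 := by
            rw [card_phi_union_of_adj hΔ (mem_phi_unique hu hv (Ne.symm hvu)).1]
    · push_neg at hB
      have hsub : (Gp G r).neighborSet x ⊆ ↑((phi G r u).erase x) := by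
        intro y hy
        obtain ⟨hne, w, hxw, hyw⟩ := gp_adj.mp hy
        rw [Finset.mem_coe, Finset.mem_erase]
        refine ⟨Ne.symm hne, ?_⟩
        rcases eq_or_ne w u with rfl | hwu
        · exact hyw
        · exact absurd hxw (hB w hwu)
      have hdiv : r / 3 ≤ r := Nat.div_le_self r 3
      calc ((Gp G r).neighborSet x).ncard
          ≤ (↑((phi G r u).erase x) : Set _).ncard :=
            Set.ncard_le_ncard hsub (Finset.finite_toSet _)
        _ = ((phi G r u).erase x).card := Set.ncard_coe_finset _
        _ = r - 1 := by rw [Finset.card_erase_of_mem hu, card_phi hΔ]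
        _ ≤ 2 * r - r / 3 - 1 := by omega
  · have hempty : (Gp G r).neighborSet x = ∅ := by
      ext y
      simp only [SimpleGraph.mem_neighborSet, Set.mem_empty_iff_false, iff_false]
      intro hy
      obtain ⟨-, w, hxw, -⟩ := gp_adj.mp hy
      exact hx ⟨w, hxw⟩
    rw [hempty, Set.ncard_empty]
    exact Nat.zero_le _

lemma nbhd_exact (hΔ : G.maxDegree ≤ 3) (hr : 3 ≤ r) {u v : V} (huv : G.Adj u v) :
    ∃ x, ((Gp G r).neighborSet x).ncard = 2 * r - r / 3 - 1 := by
  have h0r : 0 < r := by omega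
  have hm1 : ((⟨0, h0r⟩ : Fin r) : ℕ) < r / 3 := by simp only [Fin.val_mk]; omega
  set x : (Sym2 V ⊕ V) × Fin r := (Sum.inl s(u, v), (⟨0, h0r⟩ : Fin r)) with hxdef
  have hxu : x ∈ phi G r u := mem_phi.mpr (Or.inl ⟨v, huv, rfl, hm1⟩)
  have hxv : x ∈ phi G r v := mem_phi.mpr (Or.inl ⟨u, huv.symm, by
    simp only [hxdef]; rw [Sym2.eq_swap], hm1⟩)
  refine ⟨x, ?_⟩
  have hset : (Gp G r).neighborSet x = ↑((phi G r u ∪ phi G r v).erase x) := by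
    apply Set.Subset.antisymm (nbhd_subset_two hxu hxv (Ne.symm huv.ne))
    intro y hy
    rw [Finset.mem_coe, Finset.mem_erase, Finset.mem_union] at hy
    obtain ⟨hyx, hy2 | hy2⟩ := hy
    · exact gp_adj.mpr ⟨Ne.symm hyx, u, hxu, hy2⟩
    · exact gp_adj.mpr ⟨Ne.symm hyx, v, hxv, hy2⟩
  rw [hset, Set.ncard_coe_finset,
    Finset.card_erase_of_mem (Finset.mem_union_left _ hxu),
    card_phi_union_of_adj hΔ huv]

end Stmt4Aux


open Stmt4Aux in
/-- For `r ≥ 3` and a finite simple triangle-free graph `G` of maximum degree at most `3`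
with at least one edge, there is a finite simple graph `G'` and a bijection `φ` from the
vertices of `G` onto the set of all `r`-cliques of `G'` such that cliques of adjacent
vertices intersect in exactly `⌊r/3⌋` vertices, cliques of non-adjacent vertices are
disjoint, and the maximum degree of `G'` is exactly `⌈5r/3⌉ - 1`. -/
theorem stmt4 {V : Type*} [Fintype V] [DecidableEq V] (G : SimpleGraph V)
    [DecidableRel G.Adj] (r : ℕ) (hr : 3 ≤ r)
    (htf : G.CliqueFree 3) (hΔ : G.maxDegree ≤ 3) (hedge : ∃ u v : V, G.Adj u v) :
    ∃ (N : ℕ) (G' : SimpleGraph (Fin N)) (φ : V → Finset (Fin N)),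
      Function.Injective φ ∧
      (∀ K : Finset (Fin N), G'.IsNClique r K ↔ ∃ u : V, φ u = K) ∧
      (∀ u v : V, u ≠ v → G.Adj u v → (φ u ∩ φ v).card = r / 3) ∧
      (∀ u v : V, u ≠ v → ¬ G.Adj u v → φ u ∩ φ v = ∅) ∧
      (∀ w : Fin N, (G'.neighborSet w).ncard ≤ (5 * r + 2) / 3 - 1) ∧
      (∃ w : Fin N, (G'.neighborSet w).ncard = (5 * r + 2) / 3 - 1) := by
  classical
  set W := (Sym2 V ⊕ V) × Fin r with hW
  set N := Fintype.card W with hN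
  set e : W ≃ Fin N := Fintype.equivFin W with he
  refine ⟨N, ⟨fun a b => (Gp G r).Adj (e.symm a) (e.symm b),
    ⟨fun a b h => (Gp G r).adj_symm h⟩, ⟨fun a h => (Gp G r).irrefl h⟩⟩,
    fun u => (phi G r u).image e, ?_, ?_, ?_, ?_, ?_, ?_⟩
  case _ =>
    -- injectivity
    intro u v huv
    by_contra hne
    have h1 : phi G r u = phi G r v := Finset.image_injective e.injective huv
    have hcard : (phi G r u ∩ phi G r v).card = r := by
      rw [h1, Finset.inter_self, card_phi hΔ]
    by_cases hadj : G.Adj u v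
    · rw [card_phi_inter_of_adj hadj] at hcard; omega
    · rw [phi_inter_of_not_adj hne hadj] at hcard
      simp at hcard; omega
  case _ =>
    -- cliques
    intro K
    constructor
    · intro hK
      have hK' : (Gp G r).IsNClique r (K.image e.symm) := by
        constructor
        · rintro x hx y hy hxy
          simp only [Finset.coe_image, Set.mem_image, Finset.mem_coe] at hx hy
          obtain ⟨a, ha, rfl⟩ := hx
          obtain ⟨b, hb, rfl⟩ := hy
          have hab : a ≠ b := fun h => hxy (by rw [h])
          exact hK.1 ha hb hab
        · rw [Finset.card_image_of_injective _ e.symm.injective, hK.2]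
      obtain ⟨u, hu⟩ := clique_subset hr htf hK'
      have hcards : (K.image e.symm).card = r := by
        rw [Finset.card_image_of_injective _ e.symm.injective, hK.2]
      have heq : K.image e.symm = phi G r u :=
        Finset.eq_of_subset_of_card_le hu (by rw [hcards, card_phi hΔ])
      refine ⟨u, ?_⟩
      show (phi G r u).image e = K
      rw [← heq, Finset.image_image]
      simp only [Equiv.self_comp_symm, Finset.image_id]
    · rintro ⟨u, rfl⟩
      constructor
      · rintro x hx y hy hxy
        simp only [Finset.coe_image, Set.mem_image, Finset.mem_coe] at hx hy
        obtain ⟨a, ha, rfl⟩ := hx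
        obtain ⟨b, hb, rfl⟩ := hy
        have hab : a ≠ b := fun h => hxy (by rw [h])
        show (Gp G r).Adj (e.symm (e a)) (e.symm (e b))
        rw [Equiv.symm_apply_apply, Equiv.symm_apply_apply]
        exact gp_adj.mpr ⟨hab, u, ha, hb⟩
      · rw [Finset.card_image_of_injective _ e.injective, card_phi hΔ]
  case _ =>
    intro u v hne hadj
    rw [← Finset.image_inter _ _ e.injective,
      Finset.card_image_of_injective _ e.injective, card_phi_inter_of_adj hadj]
  case _ =>
    intro u v hne hnadj
    rw [← Finset.image_inter _ _ e.injective, phi_inter_of_not_adj hne hnadj,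
      Finset.image_empty]
  case _ =>
    intro w
    have hb := nbhd_bound (r := r) hΔ (e.symm w)
    have hset : {b : Fin N | (Gp G r).Adj (e.symm w) (e.symm b)}
        = e.symm ⁻¹' ((Gp G r).neighborSet (e.symm w)) := rfl
    have hcard : ({b : Fin N | (Gp G r).Adj (e.symm w) (e.symm b)}).ncard
        = ((Gp G r).neighborSet (e.symm w)).ncard := by
      rw [hset, ← Equiv.image_eq_preimage_symm, Set.ncard_image_of_injective _ e.injective]
    calc ({b : Fin N | (Gp G r).Adj (e.symm w) (e.symm b)}).ncard
        = ((Gp G r).neighborSet (e.symm w)).ncard := hcard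
      _ ≤ 2 * r - r / 3 - 1 := hb
      _ = (5 * r + 2) / 3 - 1 := by omega
  case _ =>
    obtain ⟨u, v, huv⟩ := hedge
    obtain ⟨x, hx⟩ := nbhd_exact hΔ hr huv
    refine ⟨e x, ?_⟩
    have hcard : ({b : Fin N | (Gp G r).Adj (e.symm (e x)) (e.symm b)}).ncard
        = ((Gp G r).neighborSet (e.symm (e x))).ncard := by
      rw [show {b : Fin N | (Gp G r).Adj (e.symm (e x)) (e.symm b)}
          = e.symm ⁻¹' ((Gp G r).neighborSet (e.symm (e x))) from rfl,
        ← Equiv.image_eq_preimage_symm, Set.ncard_image_of_injective _ e.injective]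
    calc ({b : Fin N | (Gp G r).Adj (e.symm (e x)) (e.symm b)}).ncard
        = ((Gp G r).neighborSet (e.symm (e x))).ncard := hcard
      _ = 2 * r - r / 3 - 1 := by rw [Equiv.symm_apply_apply]; exact hx
      _ = (5 * r + 2) / 3 - 1 := by omega
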